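/- Let W_1,...,W_L be d×d diagonal matrices following the gradient flow of the regularized loss L_R(W_1,...,W_L) = ‖W* − W_L···W_1‖² + Tr(∏_ℓ (W_ℓ² + η² I) − ∏_ℓ W_ℓ²), i.e., dW_ℓ/dt = −∇_{W_ℓ} L_R. Then for each ℓ, d/dt (W_ℓ²(t) − W_{ℓ+1}²(t)) = −4η² (∏_{r≠ℓ,ℓ+1} (W_r²(t) + η² I)) (W_ℓ²(t) − W_{ℓ+1}²(t)). -/

import Mathlib

open Finset

/-- The regularized loss `L_R(W₁,…,W_L) = ‖W* − W_L⋯W₁‖² + Tr(∏(W_ℓ²+η²I) − ∏W_ℓ²)`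
for diagonal matrices `W_ℓ = diagonal (v ℓ)` and `W* = diagonal Wstar`, expressed in terms
of the diagonal entries. -/
def diagRegLoss (d L : ℕ) (η : ℝ) (Wstar : Fin d → ℝ) (v : Fin L → Fin d → ℝ) : ℝ :=
  (∑ h, (Wstar h - ∏ ℓ, v ℓ h) ^ 2) +
    ∑ h, ((∏ ℓ, ((v ℓ h) ^ 2 + η ^ 2)) - ∏ ℓ, (v ℓ h) ^ 2)

lemma diagRegLoss_update_eq (d L : ℕ) (η : ℝ) (Wstar : Fin d → ℝ)
    (v : Fin L → Fin d → ℝ) (ℓ : Fin L) (h : Fin d) :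
    (fun x => diagRegLoss d L η Wstar (Function.update v ℓ (Function.update (v ℓ) h x)))
    = fun x =>
      (((Wstar h - x * ∏ r ∈ Finset.univ.erase ℓ, v r h) ^ 2
          + ∑ h' ∈ Finset.univ.erase h, (Wstar h' - ∏ r, v r h') ^ 2)
        + (((x ^ 2 + η ^ 2) * ∏ r ∈ Finset.univ.erase ℓ, ((v r h) ^ 2 + η ^ 2)
              - (x * ∏ r ∈ Finset.univ.erase ℓ, v r h) ^ 2)
          + ∑ h' ∈ Finset.univ.erase h,
              ((∏ r, ((v r h') ^ 2 + η ^ 2)) - ∏ r, (v r h') ^ 2))) := by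
  funext x
  have hu : ∀ (r : Fin L) (h' : Fin d),
      Function.update v ℓ (Function.update (v ℓ) h x) r h'
        = if r = ℓ ∧ h' = h then x else v r h' := by
    intro r h'
    rcases eq_or_ne r ℓ with rfl | hr
    · rcases eq_or_ne h' h with rfl | hh
      · simp
      · simp [Function.update_of_ne hh, hh]
    · simp [Function.update_of_ne hr, hr]
  have hph : (∏ r, Function.update v ℓ (Function.update (v ℓ) h x) r h)
      = x * ∏ r ∈ Finset.univ.erase ℓ, v r h := by
    have he : (fun r => Function.update v ℓ (Function.update (v ℓ) h x) r h)
        = Function.update (fun r => v r h) ℓ x := by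
      funext r
      rcases eq_or_ne r ℓ with rfl | hr
      · simp [hu]
      · simp [hu, hr, Function.update_of_ne hr]
    rw [show (∏ r, Function.update v ℓ (Function.update (v ℓ) h x) r h)
        = ∏ r, Function.update (fun r => v r h) ℓ x r from by rw [he],
      Finset.prod_update_of_mem (Finset.mem_univ ℓ), Finset.sdiff_singleton_eq_erase]
  have hqh : (∏ r, ((Function.update v ℓ (Function.update (v ℓ) h x) r h) ^ 2 + η ^ 2))
      = (x ^ 2 + η ^ 2) * ∏ r ∈ Finset.univ.erase ℓ, ((v r h) ^ 2 + η ^ 2) := by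
    have he : (fun r => (Function.update v ℓ (Function.update (v ℓ) h x) r h) ^ 2 + η ^ 2)
        = Function.update (fun r => (v r h) ^ 2 + η ^ 2) ℓ (x ^ 2 + η ^ 2) := by
      funext r
      rcases eq_or_ne r ℓ with rfl | hr
      · simp [hu]
      · simp [hu, hr, Function.update_of_ne hr]
    rw [show (∏ r, ((Function.update v ℓ (Function.update (v ℓ) h x) r h) ^ 2 + η ^ 2))
        = ∏ r, Function.update (fun r => (v r h) ^ 2 + η ^ 2) ℓ (x ^ 2 + η ^ 2) r
        from by rw [he],
      Finset.prod_update_of_mem (Finset.mem_univ ℓ), Finset.sdiff_singleton_eq_erase]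
  have hne : ∀ h' : Fin d, h' ≠ h →
      ∀ r : Fin L, Function.update v ℓ (Function.update (v ℓ) h x) r h' = v r h' := by
    intro h' hh r
    rw [hu]; simp [hh]
  unfold diagRegLoss
  rw [← Finset.add_sum_erase _ _ (Finset.mem_univ h),
    ← Finset.add_sum_erase _ (fun h' => (∏ r, ((Function.update v ℓ (Function.update (v ℓ) h x) r h') ^ 2 + η ^ 2)) - ∏ r, (Function.update v ℓ (Function.update (v ℓ) h x) r h') ^ 2) (Finset.mem_univ h)]
  congr 1
  · congr 1
    · rw [hph]
    · exact Finset.sum_congr rfl fun h' hh' => by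
        simp only [hne h' (Finset.mem_erase.mp hh').1]
  · congr 1
    · rw [Finset.prod_pow, hph, hqh]
    · exact Finset.sum_congr rfl fun h' hh' => by
        simp only [hne h' (Finset.mem_erase.mp hh').1]

lemma deriv_diagRegLoss_update (d L : ℕ) (η : ℝ) (Wstar : Fin d → ℝ)
    (v : Fin L → Fin d → ℝ) (ℓ : Fin L) (h : Fin d) (x : ℝ) :
    HasDerivAt (fun x => diagRegLoss d L η Wstar
        (Function.update v ℓ (Function.update (v ℓ) h x)))
      (2 * (Wstar h - x * ∏ r ∈ Finset.univ.erase ℓ, v r h)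
          * (-(∏ r ∈ Finset.univ.erase ℓ, v r h))
        + (2 * x * ∏ r ∈ Finset.univ.erase ℓ, ((v r h) ^ 2 + η ^ 2)
          - 2 * x * (∏ r ∈ Finset.univ.erase ℓ, v r h) ^ 2)) x := by
  rw [diagRegLoss_update_eq]
  set p := ∏ r ∈ Finset.univ.erase ℓ, v r h
  set q := ∏ r ∈ Finset.univ.erase ℓ, ((v r h) ^ 2 + η ^ 2)
  have H1 : HasDerivAt (fun x : ℝ => (Wstar h - x * p) ^ 2)
      (2 * (Wstar h - x * p) ^ 1 * (-p)) x := by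
    have := (((hasDerivAt_id x).mul_const p).const_sub (Wstar h)).fun_pow 2
    simpa using this
  have H2 : HasDerivAt (fun x : ℝ => (x ^ 2 + η ^ 2) * q - (x * p) ^ 2)
      ((2 * x ^ 1) * q - 2 * (x * p) ^ 1 * p) x := by
    have h1 := (((hasDerivAt_id x).fun_pow 2).add_const (η ^ 2)).mul_const q
    have h2 := ((hasDerivAt_id x).mul_const p).fun_pow 2
    have := h1.fun_sub h2
    simpa using this
  have H := (H1.add_const
      (∑ h' ∈ Finset.univ.erase h, (Wstar h' - ∏ r, v r h') ^ 2)).fun_add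
    (H2.add_const
      (∑ h' ∈ Finset.univ.erase h, ((∏ r, ((v r h') ^ 2 + η ^ 2)) - ∏ r, (v r h') ^ 2)))
  refine H.congr_deriv ?_
  ring

/-- Along the gradient flow of the regularized loss (stated entrywise for the diagonal
entries `w t ℓ h` of the weight matrices `W_ℓ(t)`), the difference of squares of
consecutive layers satisfies
`d/dt (W_ℓ² − W_{ℓ+1}²) = −4η² (∏_{r≠ℓ,ℓ+1} (W_r² + η² I)) (W_ℓ² − W_{ℓ+1}²)`. -/
theorem balancing_ode_regularized_flow
    (d L : ℕ) (hd : 1 ≤ d) (hL : 2 ≤ L) (η : ℝ) (hη : 0 < η)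
    (Wstar : Fin d → ℝ) (w : ℝ → Fin L → Fin d → ℝ)
    (hflow : ∀ t (ℓ : Fin L) (h : Fin d),
      HasDerivAt (fun s => w s ℓ h)
        (-(deriv (fun x => diagRegLoss d L η Wstar
            (Function.update (w t) ℓ (Function.update (w t ℓ) h x))) (w t ℓ h))) t)
    (ℓ ℓ' : Fin L) (hsucc : (ℓ' : ℕ) = (ℓ : ℕ) + 1) :
    ∀ t (h : Fin d),
      HasDerivAt (fun s => (w s ℓ h) ^ 2 - (w s ℓ' h) ^ 2)
        (-(4 * η ^ 2) *
            (∏ r ∈ (Finset.univ.erase ℓ).erase ℓ', ((w t r h) ^ 2 + η ^ 2)) *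
            ((w t ℓ h) ^ 2 - (w t ℓ' h) ^ 2)) t := by
  intro t h
  have hne : ℓ ≠ ℓ' := by
    intro e; rw [e] at hsucc; omega
  have hℓ'mem : ℓ' ∈ Finset.univ.erase ℓ := Finset.mem_erase.mpr ⟨hne.symm, Finset.mem_univ _⟩
  have hℓmem : ℓ ∈ Finset.univ.erase ℓ' := Finset.mem_erase.mpr ⟨hne, Finset.mem_univ _⟩
  have hd1 := hflow t ℓ h
  have hd2 := hflow t ℓ' h
  rw [(deriv_diagRegLoss_update d L η Wstar (w t) ℓ h (w t ℓ h)).deriv] at hd1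
  rw [(deriv_diagRegLoss_update d L η Wstar (w t) ℓ' h (w t ℓ' h)).deriv] at hd2
  have H := (hd1.fun_pow 2).fun_sub (hd2.fun_pow 2)
  refine H.congr_deriv ?_
  have e1 : (∏ r ∈ Finset.univ.erase ℓ, w t r h)
      = w t ℓ' h * ∏ r ∈ (Finset.univ.erase ℓ).erase ℓ', w t r h :=
    (Finset.mul_prod_erase _ _ hℓ'mem).symm
  have e2 : (∏ r ∈ Finset.univ.erase ℓ, ((w t r h) ^ 2 + η ^ 2))
      = ((w t ℓ' h) ^ 2 + η ^ 2) * ∏ r ∈ (Finset.univ.erase ℓ).erase ℓ', ((w t r h) ^ 2 + η ^ 2) :=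
    (Finset.mul_prod_erase _ _ hℓ'mem).symm
  have ecomm : (Finset.univ.erase ℓ').erase ℓ = (Finset.univ.erase ℓ).erase ℓ' :=
    Finset.erase_right_comm
  have e3 : (∏ r ∈ Finset.univ.erase ℓ', w t r h)
      = w t ℓ h * ∏ r ∈ (Finset.univ.erase ℓ).erase ℓ', w t r h := by
    rw [← ecomm]; exact (Finset.mul_prod_erase _ _ hℓmem).symm
  have e4 : (∏ r ∈ Finset.univ.erase ℓ', ((w t r h) ^ 2 + η ^ 2))
      = ((w t ℓ h) ^ 2 + η ^ 2) * ∏ r ∈ (Finset.univ.erase ℓ).erase ℓ', ((w t r h) ^ 2 + η ^ 2) := by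
    rw [← ecomm]; exact (Finset.mul_prod_erase _ _ hℓmem).symm
  rw [e1, e2, e3, e4]
  ring
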